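/- Let Y : [0,T] → ℝ be continuous with Y extended by Y(s) = Y(T) for s > T, and let M := sup_{t∈[0,T]}|Y(t)| < ∞. Define Ỹ_t^n := e^{n(t−T)}(Y(t) − Y(T)) + ∫_t^T n e^{n(t−s)}(Y(t) − Y(s)) ds. Then for every ε > 0, δ ∈ (0,T), and n > 0: sup_{t∈[0,T−δ]} |Ỹ_t^n| ≤ 2M(e^{−nε} + e^{−nδ}) + sup_{t∈[0,T]} sup_{s∈[t,t+ε]} |Y(s) − Y(t)|. -/

import Mathlib

open MeasureTheory intervalIntegral

lemma exp_integral_key (n t a b : ℝ) :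
    ∫ s in a..b, n * Real.exp (n * (t - s)) =
      Real.exp (n * (t - a)) - Real.exp (n * (t - b)) := by
  have h : ∀ s ∈ Set.uIcc a b,
      HasDerivAt (fun s => -Real.exp (n * (t - s))) (n * Real.exp (n * (t - s))) s := by
    intro s _
    have h1 : HasDerivAt (fun s : ℝ => n * (t - s)) (n * (-1)) s :=
      ((hasDerivAt_id s).const_sub t).const_mul n
    have h2 := (Real.hasDerivAt_exp (n * (t - s))).comp s h1
    have h3 := h2.neg
    convert h3 using 1
    · rfl
    · rfl
    · rfl
    · ring
  rw [intervalIntegral.integral_eq_sub_of_hasDerivAt h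
    ((Continuous.intervalIntegrable (by continuity) a b))]
  ring

/-- The pathwise penalization-error estimate from Lemma 3.8:
sup_{t∈[0,T−δ]} |Ỹ_t^n| ≤ 2M(e^{−nε} + e^{−nδ}) + modulus of continuity term. -/
theorem penalization_error_estimate
    (T M n ε δ : ℝ) (hT : 0 < T) (hn : 0 < n) (hε : 0 < ε)
    (hδ0 : 0 < δ) (hδT : δ < T)
    (Y : ℝ → ℝ) (hY : Continuous Y)
    (hext : ∀ s, T ≤ s → Y s = Y T)
    (hM : ∀ t : ℝ, 0 ≤ t → |Y t| ≤ M) :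
    ∀ t ∈ Set.Icc 0 (T - δ),
      |Real.exp (n * (t - T)) * (Y t - Y T) +
          ∫ s in t..T, n * Real.exp (n * (t - s)) * (Y t - Y s)| ≤
        2 * M * (Real.exp (-n * ε) + Real.exp (-n * δ)) +
          sSup {x : ℝ | ∃ t' ∈ Set.Icc 0 T, ∃ s ∈ Set.Icc t' (t' + ε), x = |Y s - Y t'|} := by
  intro t ht
  obtain ⟨ht0, htTδ⟩ := ht
  have hM0 : 0 ≤ M := le_trans (abs_nonneg _) (hM 0 le_rfl)
  set S := {x : ℝ | ∃ t' ∈ Set.Icc 0 T, ∃ s ∈ Set.Icc t' (t' + ε), x = |Y s - Y t'|} with hS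
  have hbdd : BddAbove S := by
    refine ⟨2 * M, ?_⟩
    rintro x ⟨t', ⟨ht'0, ht'T⟩, s, ⟨hst1, hst2⟩, rfl⟩
    have hs0 : (0:ℝ) ≤ s := le_trans ht'0 hst1
    calc |Y s - Y t'| ≤ |Y s| + |Y t'| := abs_sub _ _
      _ ≤ M + M := add_le_add (hM s hs0) (hM t' ht'0)
      _ = 2 * M := by ring
  have hW0 : 0 ≤ sSup S := by
    refine le_csSup hbdd ⟨0, ⟨le_rfl, hT.le⟩, 0, ⟨le_rfl, by linarith⟩, ?_⟩
    simp
  have hWle : ∀ t' ∈ Set.Icc (0:ℝ) T, ∀ s ∈ Set.Icc t' (t' + ε),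
      |Y s - Y t'| ≤ sSup S := fun t' h1 s h2 => le_csSup hbdd ⟨t', h1, s, h2, rfl⟩
  have htT : t ≤ T := le_trans htTδ (by linarith)
  set c := min (t + ε) T with hc
  have htc : t ≤ c := le_min (by linarith) htT
  have hcT : c ≤ T := min_le_right _ _
  have hc0 : 0 ≤ c := le_trans ht0 htc
  have hg : Continuous (fun s => n * Real.exp (n * (t - s))) :=
    continuous_const.mul (Real.continuous_exp.comp (continuous_const.mul
      (continuous_const.sub continuous_id)))
  have hcont : Continuous (fun s => n * Real.exp (n * (t - s)) * (Y t - Y s)) :=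
    hg.mul (continuous_const.sub hY)
  have hint1 : IntervalIntegrable (fun s => n * Real.exp (n * (t - s)) * (Y t - Y s))
      volume t c := hcont.intervalIntegrable _ _
  have hint2 : IntervalIntegrable (fun s => n * Real.exp (n * (t - s)) * (Y t - Y s))
      volume c T := hcont.intervalIntegrable _ _
  have hsplit : (∫ s in t..T, n * Real.exp (n * (t - s)) * (Y t - Y s)) =
      (∫ s in t..c, n * Real.exp (n * (t - s)) * (Y t - Y s)) +
      (∫ s in c..T, n * Real.exp (n * (t - s)) * (Y t - Y s)) :=
    (intervalIntegral.integral_add_adjacent_intervals hint1 hint2).symm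
  -- bound the boundary term
  have hA : |Real.exp (n * (t - T)) * (Y t - Y T)| ≤ Real.exp (-n * δ) * (2 * M) := by
    rw [abs_mul, abs_of_pos (Real.exp_pos _)]
    have h1 : Real.exp (n * (t - T)) ≤ Real.exp (-n * δ) := by
      apply Real.exp_le_exp.mpr
      nlinarith
    have h2 : |Y t - Y T| ≤ 2 * M := by
      calc |Y t - Y T| ≤ |Y t| + |Y T| := abs_sub _ _
        _ ≤ M + M := add_le_add (hM t ht0) (hM T hT.le)
        _ = 2 * M := by ring
    exact mul_le_mul h1 h2 (abs_nonneg _) (Real.exp_pos _).le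
  -- bound the near integral
  have hI1 : |∫ s in t..c, n * Real.exp (n * (t - s)) * (Y t - Y s)| ≤ sSup S := by
    have hle : (∫ s in t..c, |n * Real.exp (n * (t - s)) * (Y t - Y s)|) ≤
        ∫ s in t..c, n * Real.exp (n * (t - s)) * sSup S := by
      apply intervalIntegral.integral_mono_on htc (hcont.abs.intervalIntegrable _ _)
        ((hg.mul continuous_const).intervalIntegrable _ _)
      intro s hs
      rw [abs_mul, abs_of_pos (by positivity : (0:ℝ) < n * Real.exp (n * (t - s)))]
      apply mul_le_mul_of_nonneg_left _ (by positivity)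
      rw [abs_sub_comm]
      exact hWle t ⟨ht0, htT⟩ s ⟨hs.1, le_trans hs.2 (min_le_left _ _)⟩
    calc |∫ s in t..c, n * Real.exp (n * (t - s)) * (Y t - Y s)|
        ≤ ∫ s in t..c, |n * Real.exp (n * (t - s)) * (Y t - Y s)| :=
          intervalIntegral.abs_integral_le_integral_abs htc
      _ ≤ ∫ s in t..c, n * Real.exp (n * (t - s)) * sSup S := hle
      _ = (Real.exp (n * (t - t)) - Real.exp (n * (t - c))) * sSup S := by
          rw [intervalIntegral.integral_mul_const, exp_integral_key]
      _ ≤ 1 * sSup S := by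
          apply mul_le_mul_of_nonneg_right _ hW0
          have := Real.exp_pos (n * (t - c))
          simp only [sub_self, mul_zero, Real.exp_zero]
          linarith
      _ = sSup S := one_mul _
  -- bound the far integral
  have hI2 : |∫ s in c..T, n * Real.exp (n * (t - s)) * (Y t - Y s)| ≤
      Real.exp (-n * ε) * (2 * M) := by
    have hle : (∫ s in c..T, |n * Real.exp (n * (t - s)) * (Y t - Y s)|) ≤
        ∫ s in c..T, n * Real.exp (n * (t - s)) * (2 * M) := by
      apply intervalIntegral.integral_mono_on hcT (hcont.abs.intervalIntegrable _ _)
        ((hg.mul continuous_const).intervalIntegrable _ _)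
      intro s hs
      rw [abs_mul, abs_of_pos (by positivity : (0:ℝ) < n * Real.exp (n * (t - s)))]
      apply mul_le_mul_of_nonneg_left _ (by positivity)
      calc |Y t - Y s| ≤ |Y t| + |Y s| := abs_sub _ _
        _ ≤ M + M := add_le_add (hM t ht0) (hM s (le_trans hc0 hs.1))
        _ = 2 * M := by ring
    have hexp : Real.exp (n * (t - c)) - Real.exp (n * (t - T)) ≤ Real.exp (-n * ε) := by
      rcases le_total (t + ε) T with h | h
      · have : c = t + ε := min_eq_left h
        rw [this]
        have h2 : n * (t - (t + ε)) = -n * ε := by ring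
        rw [h2]
        have := Real.exp_pos (n * (t - T))
        linarith
      · have : c = T := min_eq_right h
        rw [this]
        have := Real.exp_pos (-n * ε)
        linarith
    calc |∫ s in c..T, n * Real.exp (n * (t - s)) * (Y t - Y s)|
        ≤ ∫ s in c..T, |n * Real.exp (n * (t - s)) * (Y t - Y s)| :=
          intervalIntegral.abs_integral_le_integral_abs hcT
      _ ≤ ∫ s in c..T, n * Real.exp (n * (t - s)) * (2 * M) := hle
      _ = (Real.exp (n * (t - c)) - Real.exp (n * (t - T))) * (2 * M) := by
          rw [intervalIntegral.integral_mul_const, exp_integral_key]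
      _ ≤ Real.exp (-n * ε) * (2 * M) := mul_le_mul_of_nonneg_right hexp (by positivity)
  calc |Real.exp (n * (t - T)) * (Y t - Y T) +
          ∫ s in t..T, n * Real.exp (n * (t - s)) * (Y t - Y s)|
      ≤ |Real.exp (n * (t - T)) * (Y t - Y T)| +
          (|∫ s in t..c, n * Real.exp (n * (t - s)) * (Y t - Y s)| +
           |∫ s in c..T, n * Real.exp (n * (t - s)) * (Y t - Y s)|) := by
        rw [hsplit]
        exact le_trans (abs_add_le _ _) (by gcongr; exact abs_add_le _ _)
    _ ≤ Real.exp (-n * δ) * (2 * M) + (sSup S + Real.exp (-n * ε) * (2 * M)) := by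
        gcongr
    _ = 2 * M * (Real.exp (-n * ε) + Real.exp (-n * δ)) + sSup S := by ring
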